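/- The language { aᵏ # u | u ∈ {b,c}*, k = |{ i | 1 ≤ i ≤ |u| − n, u[i] ≠ u[i+n] }| } is accepted by a deterministic two-way Parikh automaton with O(n) states, dimension 1, and acceptance constraint {0}. -/

import Mathlib

/-- Two-way finite automaton; `Sum.inr false` is the left delimiter ⊢,
`Sum.inr true` is the right delimiter ⊣. -/
structure TwoWayFA (σ : Type) (Q : Type) where
  /-- reading direction of each state: `true` = right-reading -/
  isRight : Q → Bool
  init : Set Q
  acc : Set Q
  trans : Q → (σ ⊕ Bool) → Q → Prop

namespace TwoWayFA

variable {σ Q : Type}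

/-- The letter of ⊢w⊣ at index `i` (0-based). -/
def readAt (w : List σ) (i : ℕ) : Option (σ ⊕ Bool) :=
  if i = 0 then some (Sum.inr false)
  else if i = w.length + 1 then some (Sum.inr true)
  else (w[i - 1]?).map Sum.inl

/-- Index of the letter read from configuration `c = (state, head position)`,
where the head position counts the letters of ⊢w⊣ to the left of the head. -/
def readIdx (A : TwoWayFA σ Q) (c : Q × ℕ) : ℕ :=
  if A.isRight c.1 then c.2 else c.2 - 1

def step (A : TwoWayFA σ Q) (w : List σ) (c c' : Q × ℕ) : Prop :=
  ∃ a, readAt w (A.readIdx c) = some a ∧ A.trans c.1 a c'.1 ∧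
    (if A.isRight c.1 then c'.2 = c.2 + 1 else c.2 ≠ 0 ∧ c'.2 = c.2 - 1)

def IsRun (A : TwoWayFA σ Q) (w : List σ) (ρ : List (Q × ℕ)) : Prop :=
  ρ ≠ [] ∧ ρ.Chain' (A.step w)

/-- An accepting run starts at the left end of ⊢w⊣ in an initial state and
halts past the right delimiter in an accepting state. -/
def IsAccRun (A : TwoWayFA σ Q) (w : List σ) (ρ : List (Q × ℕ)) : Prop :=
  A.IsRun w ρ ∧ (∃ q ∈ A.init, ρ.head? = some (q, 0)) ∧
    (∃ q ∈ A.acc, ρ.getLast? = some (q, w.length + 2))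

def lang (A : TwoWayFA σ Q) : Set (List σ) := {w | ∃ ρ, A.IsAccRun w ρ}

def Deterministic (A : TwoWayFA σ Q) : Prop :=
  A.init.Subsingleton ∧ ∀ q a q₁ q₂, A.trans q a q₁ → A.trans q a q₂ → q₁ = q₂

def OneWay (A : TwoWayFA σ Q) : Prop := ∀ q, A.isRight q = true

def Unambiguous (A : TwoWayFA σ Q) : Prop :=
  ∀ w ρ₁ ρ₂, A.IsAccRun w ρ₁ → A.IsAccRun w ρ₂ → ρ₁ = ρ₂

end TwoWayFA

/-- Number of visits of run `ρ` to input position `p`. -/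
def visits {Q : Type} (ρ : List (Q × ℕ)) (p : ℕ) : ℕ :=
  (ρ.filter fun c => c.2 == p).length

/-- A run is `k`-visit if it visits every input position at most `k` times. -/
def KVisit {Q : Type} (k : ℕ) (ρ : List (Q × ℕ)) : Prop := ∀ p, visits ρ p ≤ k

/-- `A` is `k`-visit: every accepting run visits each position at most `k` times. -/
def TwoWayFA.IsKVisit {σ Q : Type} (A : TwoWayFA σ Q) (k : ℕ) : Prop :=
  ∀ w ρ, A.IsAccRun w ρ → KVisit k ρ

/-- Weight of a step (a pair of consecutive configurations) of a Parikh automaton. -/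
def stepWeight {σ Q : Type} (A : TwoWayFA σ Q) {d : ℕ}
    (lam : Q → (σ ⊕ Bool) → Q → (Fin d → ℤ)) (w : List σ)
    (cc : (Q × ℕ) × (Q × ℕ)) : Fin d → ℤ :=
  match TwoWayFA.readAt w (A.readIdx cc.1) with
  | some a => lam cc.1.1 a cc.2.1
  | none => 0

/-- Value of a run of a Parikh automaton: the sum of the weight vectors of its steps. -/
def runVal {σ Q : Type} (A : TwoWayFA σ Q) {d : ℕ}
    (lam : Q → (σ ⊕ Bool) → Q → (Fin d → ℤ)) (w : List σ) (ρ : List (Q × ℕ)) :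
    Fin d → ℤ :=
  ((ρ.zip ρ.tail).map (stepWeight A lam w)).sum

/-- Language of a two-way Parikh automaton `(A, lam, S)` with semi-linear constraint `S`. -/
def paLang {σ Q : Type} (A : TwoWayFA σ Q) {d : ℕ}
    (lam : Q → (σ ⊕ Bool) → Q → (Fin d → ℤ)) (S : Set (Fin d → ℤ)) : Set (List σ) :=
  {w | ∃ ρ, A.IsAccRun w ρ ∧ runVal A lam w ρ ∈ S}

/-- The alphabet {a, b, c, #}. -/
inductive ABCH : Type
  | a | b | c | hash
deriving DecidableEq

/-- The number of positions `i` (0-based) with `i + n < |u|` and `u[i] ≠ u[i+n]`. -/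
def mismatches (n : ℕ) (u : List ABCH) : ℕ :=
  ((Finset.range (u.length - n)).filter fun i => u[i]? ≠ u[i + n]?).card

/-- The language L_n = { a^k # u | u ∈ {b,c}*, k = #mismatches at distance n }. -/
def Ln (n : ℕ) : Set (List ABCH) :=
  {w | ∃ (k : ℕ) (u : List ABCH), (∀ x ∈ u, x = ABCH.b ∨ x = ABCH.c) ∧
    w = List.replicate k ABCH.a ++ ABCH.hash :: u ∧ k = mismatches n u}

-- ==================== my construction ====================
namespace Ln2DPA

instance : Fintype ABCH :=
  ⟨⟨↑[ABCH.a, ABCH.b, ABCH.c, ABCH.hash], by decide⟩, fun x => by cases x <;> decide⟩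

inductive St (n : ℕ) : Type
  | init | countA | scan | fin
  | rgt (x : ABCH) (j : Fin n)
  | lft (j : Fin n)
deriving DecidableEq

variable {n : ℕ}

def St.toSum : St n → (Fin 4 ⊕ (ABCH × Fin n) ⊕ Fin n)
  | .init => .inl 0
  | .countA => .inl 1
  | .scan => .inl 2
  | .fin => .inl 3
  | .rgt x j => .inr (.inl (x, j))
  | .lft j => .inr (.inr j)

lemma St.toSum_inj : Function.Injective (St.toSum (n := n)) := by
  intro s t h
  cases s <;> cases t <;> simp_all [St.toSum]

noncomputable instance : Fintype (St n) := Fintype.ofInjective _ St.toSum_inj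

lemma St.card_le : Fintype.card (St n) ≤ 5 * (n + 1) := by
  have h := Fintype.card_le_of_injective _ (St.toSum_inj (n := n))
  have hA : Fintype.card ABCH = 4 := by decide
  have h2 : Fintype.card (Fin 4 ⊕ (ABCH × Fin n) ⊕ Fin n) = 4 + (4 * n + n) := by
    simp [Fintype.card_sum, Fintype.card_prod, hA]
  rw [h2] at h
  omega

def rgtSt (n : ℕ) (x : ABCH) (j : ℕ) : St n :=
  if h : j < n then .rgt x ⟨j, h⟩ else .scan

def lftSt (n : ℕ) (j : ℕ) : St n :=
  if h : j < n then .lft ⟨j, h⟩ else .scan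

def scanNext (n : ℕ) (x : ABCH) : St n := if n = 0 then .scan else rgtSt n x (n-1)

def rgtNext (n : ℕ) (x : ABCH) (j : Fin n) : St n :=
  if j.val = 0 then lftSt n (n-1) else rgtSt n x (j.val - 1)

def lftNext (n : ℕ) (j : Fin n) : St n :=
  if j.val = 0 then .scan else lftSt n (j.val - 1)

def δ (n : ℕ) : St n → (ABCH ⊕ Bool) → Option (St n)
  | .init, .inr false => some .countA
  | .countA, .inl .a => some .countA
  | .countA, .inl .hash => some .scan
  | .scan, .inl .b => some (scanNext n .b)
  | .scan, .inl .c => some (scanNext n .c)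
  | .scan, .inr true => some .fin
  | .rgt x j, .inl .b => some (rgtNext n x j)
  | .rgt x j, .inl .c => some (rgtNext n x j)
  | .rgt _ _, .inr true => some .fin
  | .lft j, _ => some (lftNext n j)
  | _, _ => none

def lam (n : ℕ) : St n → (ABCH ⊕ Bool) → St n → (Fin 1 → ℤ)
  | .countA, .inl .a, _ => fun _ => 1
  | .rgt x j, .inl y, _ => if j.val = 0 ∧ y ≠ x then (fun _ => -1) else 0
  | _, _, _ => 0

def A (n : ℕ) : TwoWayFA ABCH (St n) where
  isRight := fun q => match q with | .lft _ => false | _ => true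
  init := {.init}
  acc := {.fin}
  trans := fun q a q' => δ n q a = some q'

lemma A_det : (A n).Deterministic := by
  constructor
  · exact Set.subsingleton_singleton
  · intro q a q₁ q₂ h₁ h₂
    simp only [A] at h₁ h₂
    rw [h₁] at h₂; exact (Option.some_injective _ h₂)

/-- functional step -/
def F (n : ℕ) (w : List ABCH) (c : St n × ℕ) : Option (St n × ℕ) :=
  (TwoWayFA.readAt w ((A n).readIdx c)).bind fun a =>
    (δ n c.1 a).bind fun q' =>
      if (A n).isRight c.1 then some (q', c.2 + 1)
      else if c.2 = 0 then none else some (q', c.2 - 1)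

lemma step_iff {w : List ABCH} {c c' : St n × ℕ} :
    (A n).step w c c' ↔ F n w c = some c' := by
  constructor
  · rintro ⟨a, hr, ht, hm⟩
    have ht' : δ n c.1 a = some c'.1 := ht
    rw [F, hr, Option.bind_some, ht', Option.bind_some]
    by_cases h : (A n).isRight c.1
    · simp only [h, if_true] at hm ⊢
      rw [← hm]
    · simp only [h, Bool.false_eq_true, if_false] at hm ⊢
      rw [if_neg hm.1, ← hm.2]
  · intro h
    rw [F] at h
    rcases hr : TwoWayFA.readAt w ((A n).readIdx c) with _ | a <;> rw [hr] at h
    · exact absurd h (by simp)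
    rw [Option.bind_some] at h
    rcases hd : δ n c.1 a with _ | q' <;> rw [hd] at h
    · exact absurd h (by simp)
    rw [Option.bind_some] at h
    by_cases hR : (A n).isRight c.1
    · rw [if_pos hR] at h
      obtain rfl := Option.some.inj h
      exact ⟨a, hr, hd, by simp only [hR, if_true]⟩
    · rw [if_neg hR] at h
      by_cases h0 : c.2 = 0
      · rw [if_pos h0] at h; exact absurd h (by simp)
      · rw [if_neg h0] at h
        obtain rfl := Option.some.inj h
        exact ⟨a, hr, hd, by simp only [hR, Bool.false_eq_true, if_false]; exact ⟨h0, trivial⟩⟩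

end Ln2DPA

section Generic
variable {α : Type}

/-- forced runs of a partial function are unique -/
lemma forced_unique (f : α → Option α) :
    ∀ (ρ₁ ρ₂ : List α), ρ₁.Chain' (fun x y => f x = some y) →
      ρ₂.Chain' (fun x y => f x = some y) → ρ₁ ≠ [] → ρ₂ ≠ [] →
      ρ₁.head? = ρ₂.head? →
      (∀ x, ρ₁.getLast? = some x → f x = none) →
      (∀ x, ρ₂.getLast? = some x → f x = none) → ρ₁ = ρ₂ := by
  intro ρ₁
  induction ρ₁ with
  | nil => intro ρ₂ _ _ h; exact absurd rfl h
  | cons c t ih =>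
    intro ρ₂ hc1 hc2 _ hne2 hh hl1 hl2
    rcases ρ₂ with _ | ⟨c₂, t₂⟩
    · exact absurd rfl hne2
    obtain rfl : c = c₂ := by simpa using hh
    rcases t with _ | ⟨d, t⟩
    · rcases t₂ with _ | ⟨d₂, t₂⟩
      · rfl
      · have h1 : f c = none := hl1 c rfl
        have h2 : f c = some d₂ := (List.isChain_cons_cons.mp hc2).1
        rw [h1] at h2; exact absurd h2 (by simp)
    · rcases t₂ with _ | ⟨d₂, t₂⟩
      · have h1 : f c = none := hl2 c rfl
        have h2 : f c = some d := (List.isChain_cons_cons.mp hc1).1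
        rw [h1] at h2; exact absurd h2 (by simp)
      · have h2 : f c = some d₂ := (List.isChain_cons_cons.mp hc2).1
        have h1 : f c = some d := (List.isChain_cons_cons.mp hc1).1
        rw [h1] at h2
        obtain rfl := Option.some.inj h2
        have := ih (d :: t₂) (List.isChain_cons_cons.mp hc1).2 (List.isChain_cons_cons.mp hc2).2
          (by simp) (by simp) rfl
          (fun x hx => hl1 x (by rw [List.getLast?_cons_cons]; exact hx))
          (fun x hx => hl2 x (by rw [List.getLast?_cons_cons]; exact hx))
        rw [this]

end Generic

section RunVal
variable {σ Q : Type} (A : TwoWayFA σ Q) {d : ℕ}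
  (lam : Q → (σ ⊕ Bool) → Q → (Fin d → ℤ)) (w : List σ)

lemma runVal_nil : runVal A lam w [] = 0 := by simp [runVal]

lemma runVal_single (c : Q × ℕ) : runVal A lam w [c] = 0 := by simp [runVal]

lemma runVal_cons_cons (c c' : Q × ℕ) (l : List (Q × ℕ)) :
    runVal A lam w (c :: c' :: l) = stepWeight A lam w (c, c') + runVal A lam w (c' :: l) := by
  simp [runVal, List.zip_cons_cons]

lemma runVal_append (l₁ : List (Q × ℕ)) (c : Q × ℕ) (l₂ : List (Q × ℕ))
    (h : l₁.getLast? = some c) :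
    runVal A lam w (l₁ ++ l₂) = runVal A lam w l₁ + runVal A lam w (c :: l₂) := by
  induction l₁ with
  | nil => simp at h
  | cons a t ih =>
    rcases t with _ | ⟨b, t⟩
    · obtain rfl : a = c := by simpa using h
      rw [List.singleton_append, runVal_single, zero_add]
    · rw [List.cons_append, List.cons_append, runVal_cons_cons, ← List.cons_append,
        ih (by rwa [List.getLast?_cons_cons] at h), runVal_cons_cons]
      abel

end RunVal

namespace Ln2DPA

variable {n : ℕ} {w : List ABCH}

/-- reachability with value -/
def Reach (n : ℕ) (w : List ABCH) (c : St n × ℕ) (z : ℤ) (c' : St n × ℕ) : Prop :=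
  ∃ l : List (St n × ℕ), l.head? = some c ∧ l.getLast? = some c' ∧
    l.Chain' ((A n).step w) ∧ runVal (A n) (lam n) w l = fun _ => z

lemma Reach.refl (c : St n × ℕ) : Reach n w c 0 c :=
  ⟨[c], rfl, rfl, List.isChain_singleton _, by rw [runVal_single]; rfl⟩

lemma Reach.single {c c' : St n × ℕ} {z : ℤ} (h : (A n).step w c c')
    (hz : stepWeight (A n) (lam n) w (c, c') = fun _ => z) : Reach n w c z c' :=
  ⟨[c, c'], rfl, rfl, List.isChain_pair.mpr h, by rw [runVal_cons_cons, runVal_single, hz]; funext i; simp⟩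

lemma Reach.trans {c c' c'' : St n × ℕ} {z₁ z₂ : ℤ}
    (h₁ : Reach n w c z₁ c') (h₂ : Reach n w c' z₂ c'') : Reach n w c (z₁ + z₂) c'' := by
  obtain ⟨l₁, hh₁, hl₁, hc₁, hv₁⟩ := h₁
  obtain ⟨l₂, hh₂, hl₂, hc₂, hv₂⟩ := h₂
  rcases l₂ with _ | ⟨e, t₂⟩
  · simp at hh₂
  obtain rfl : e = c' := by simpa using hh₂
  refine ⟨l₁ ++ t₂, ?_, ?_, ?_, ?_⟩
  · rcases l₁ with _ | ⟨e₁, t₁⟩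
    · simp at hh₁
    · simpa using hh₁
  · rcases t₂ with _ | ⟨e₂, t₂⟩
    · obtain rfl : e = c'' := by simpa using hl₂
      simpa using hl₁
    · rw [List.getLast?_append]
      have h : (e₂ :: t₂).getLast? = some c'' := by
        rwa [List.getLast?_cons_cons] at hl₂
      simp [h]
  · show List.IsChain _ (_ ++ _)
    rw [List.isChain_append]
    refine ⟨hc₁, hc₂.tail, ?_⟩
    intro x hx y hy
    rw [hl₁] at hx
    obtain rfl : e = x := by simpa using hx
    rcases t₂ with _ | ⟨e₂, t₂⟩
    · simp at hy
    · obtain rfl : e₂ = y := by simpa using hy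
      exact (List.isChain_cons_cons.mp hc₂).1
  · rw [runVal_append (A n) (lam n) w l₁ e t₂ hl₁, hv₁, hv₂]
    funext i; simp

end Ln2DPA

namespace Ln2DPA

open TwoWayFA

section Word

variable (n k : ℕ) (u : List ABCH)

/-- the word a^k # u -/
def W (k : ℕ) (u : List ABCH) : List ABCH :=
  List.replicate k ABCH.a ++ ABCH.hash :: u

lemma W_len : (W k u).length = k + 1 + u.length := by
  simp [W]; omega

lemma ra0 : readAt (W k u) 0 = some (Sum.inr false) := by simp [readAt]

lemma raA {j : ℕ} (hj : j < k) : readAt (W k u) (j + 1) = some (Sum.inl ABCH.a) := by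
  rw [readAt, if_neg (by omega), if_neg (by rw [W_len]; omega)]
  have : (W k u)[j]? = some ABCH.a := by
    rw [W, List.getElem?_append_left (by simpa using hj), List.getElem?_eq_some_iff]
    exact ⟨by simpa using hj, List.getElem_replicate _⟩
  rw [show j + 1 - 1 = j by omega, this]; rfl

lemma raH : readAt (W k u) (k + 1) = some (Sum.inl ABCH.hash) := by
  rw [readAt, if_neg (by omega), if_neg (by rw [W_len]; omega)]
  have : (W k u)[k]? = some ABCH.hash := by
    rw [W, List.getElem?_append_right (by simp), List.length_replicate]
    simp
  rw [show k + 1 - 1 = k from rfl, this]; rfl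

lemma raU {j : ℕ} {x : ABCH} (hx : u[j]? = some x) :
    readAt (W k u) (k + 2 + j) = some (Sum.inl x) := by
  have hj : j < u.length := by
    rw [List.getElem?_eq_some_iff] at hx; exact hx.1
  rw [readAt, if_neg (by omega), if_neg (by rw [W_len]; omega)]
  have : (W k u)[k + 2 + j - 1]? = some x := by
    rw [W, List.getElem?_append_right (by simp; omega), List.length_replicate]
    have : k + 2 + j - 1 - k = j + 1 := by omega
    rw [this]
    simpa using hx
  rw [this]; rfl

lemma raEnd : readAt (W k u) (k + 2 + u.length) = some (Sum.inr true) := by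
  rw [readAt, if_neg (by omega), if_pos (by rw [W_len]; omega)]

end Word

section Steps

variable {n k : ℕ} {u : List ABCH}

lemma reach_right {q q' : St n} {m : ℕ} {a : ABCH ⊕ Bool} {z : ℤ}
    (hq : (A n).isRight q = true) (hr : readAt (W k u) m = some a)
    (hd : δ n q a = some q') (hz : lam n q a q' = fun _ => z) :
    Reach n (W k u) (q, m) z (q', m + 1) := by
  have hstep : (A n).step (W k u) (q, m) (q', m + 1) := by
    refine ⟨a, ?_, hd, by simp [hq]⟩
    simpa [readIdx, hq] using hr
  refine Reach.single hstep ?_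
  have h2 : readAt (W k u) ((A n).readIdx (q, m)) = some a := by simpa [readIdx, hq] using hr
  rw [stepWeight, h2]
  exact hz

lemma reach_left {q q' : St n} {m : ℕ} {a : ABCH ⊕ Bool} {z : ℤ}
    (hq : (A n).isRight q = false) (hm : m ≠ 0) (hr : readAt (W k u) (m - 1) = some a)
    (hd : δ n q a = some q') (hz : lam n q a q' = fun _ => z) :
    Reach n (W k u) (q, m) z (q', m - 1) := by
  have hstep : (A n).step (W k u) (q, m) (q', m - 1) := by
    refine ⟨a, ?_, hd, by simp [hq, hm]⟩
    simpa [readIdx, hq] using hr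
  refine Reach.single hstep ?_
  have h2 : readAt (W k u) ((A n).readIdx (q, m)) = some a := by simpa [readIdx, hq] using hr
  rw [stepWeight, h2]
  exact hz

lemma Reach.cast {w : List ABCH} {c c' c'' : St n × ℕ} {z z' : ℤ}
    (h : Reach n w c z c') (hz : z = z') (hc : c' = c'') : Reach n w c z' c'' := by
  subst hz; subst hc; exact h

end Steps

end Ln2DPA

namespace Ln2DPA

open TwoWayFA

def IsBC (x : ABCH) : Prop := x = ABCH.b ∨ x = ABCH.c

section Helpers

variable {n : ℕ}

lemma δ_scan_bc {x : ABCH} (h : IsBC x) :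
    δ n .scan (.inl x) = some (scanNext n x) := by rcases h with rfl | rfl <;> rfl

lemma δ_rgt_bc {x y : ABCH} {j : Fin n} (h : IsBC y) :
    δ n (.rgt x j) (.inl y) = some (rgtNext n x j) := by rcases h with rfl | rfl <;> rfl

lemma lam_rgt_ne {x y : ABCH} {j : Fin n} (h : j.val ≠ 0) (q' : St n) :
    lam n (.rgt x j) (.inl y) q' = fun _ => 0 := by
  show (if j.val = 0 ∧ y ≠ x then (fun _ => (-1 : ℤ)) else (0 : Fin 1 → ℤ)) = fun _ => 0
  rw [if_neg (by tauto)]; rfl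

lemma lam_rgt_zero {x y : ABCH} {j : Fin n} (h : j.val = 0) (q' : St n) :
    lam n (.rgt x j) (.inl y) q' = fun _ => if y ≠ x then -1 else 0 := by
  show (if j.val = 0 ∧ y ≠ x then (fun _ => (-1 : ℤ)) else (0 : Fin 1 → ℤ))
      = fun _ => if y ≠ x then -1 else 0
  by_cases hxy : y = x
  · rw [if_neg (by tauto)]; funext i; simp [hxy]
  · rw [if_pos ⟨h, hxy⟩]; funext i; simp [hxy]

lemma rgtSt_lt {x : ABCH} {j : ℕ} (h : j < n) : rgtSt n x j = .rgt x ⟨j, h⟩ := dif_pos h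

lemma lftSt_lt {j : ℕ} (h : j < n) : lftSt n j = .lft ⟨j, h⟩ := dif_pos h

lemma mismatches_nil : mismatches n [] = 0 := by simp [mismatches]

lemma mismatches_short {x : ABCH} {v : List ABCH} (h : v.length + 1 ≤ n) :
    mismatches n (x :: v) = 0 := by
  rw [mismatches]
  have h0 : (x :: v).length - n = 0 := by simp; omega
  rw [h0]
  simp

lemma mismatches_cons {x : ABCH} {v : List ABCH} (h : n ≤ v.length) :
    mismatches n (x :: v) =
      (if (x :: v)[n]? ≠ some x then 1 else 0) + mismatches n v := by
  rw [mismatches, mismatches]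
  have h1 : (x :: v).length - n = (v.length - n) + 1 := by simp; omega
  rw [h1, Finset.card_filter, Finset.card_filter, Finset.sum_range_succ']
  have h2 : ∀ i, (if (x :: v)[i + 1]? ≠ (x :: v)[i + 1 + n]? then (1:ℕ) else 0)
      = if v[i]? ≠ v[i + n]? then 1 else 0 := by
    intro i
    have e1 : (x :: v)[i + 1]? = v[i]? := rfl
    have e2 : (x :: v)[i + 1 + n]? = v[i + n]? := by
      rw [show i + 1 + n = (i + n) + 1 by omega]; rfl
    rw [e1, e2]
  have h3 : (if (x :: v)[0]? ≠ (x :: v)[0 + n]? then (1:ℕ) else 0)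
      = if (x :: v)[n]? ≠ some x then 1 else 0 := by
    have e1 : (x :: v)[0]? = some x := rfl
    rw [e1, Nat.zero_add]
    exact if_congr ne_comm rfl rfl
  rw [Finset.sum_congr rfl (fun i _ => h2 i), h3, add_comm]

end Helpers

section Blocks

variable {n k : ℕ} {u : List ABCH}

/-- the rightward walk inside a block -/
lemma reach_rgt (hn : n ≠ 0) (x : ABCH) (i : ℕ) :
    ∀ t, t ≤ n - 1 →
    (∀ s, s < t → ∃ y, u[i + 1 + s]? = some y ∧ IsBC y) →
    Reach n (W k u) (rgtSt n x (n-1), k+3+i) 0 (rgtSt n x (n-1-t), k+3+i+t) := by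
  intro t
  induction t with
  | zero => intro _ _; exact (Reach.refl _).cast rfl rfl
  | succ t ih =>
    intro ht hreads
    have h1 := ih (by omega) (fun s hs => hreads s (by omega))
    obtain ⟨y, hy, hbc⟩ := hreads t (by omega)
    have hr : readAt (W k u) (k+3+i+t) = some (.inl y) := by
      rw [show k+3+i+t = k+2+(i+1+t) by omega]
      exact raU k u hy
    have hd : δ n (.rgt x ⟨n-1-t, by omega⟩) (.inl y) = some (rgtSt n x (n-1-(t+1))) := by
      rw [δ_rgt_bc hbc]
      simp only [rgtNext]
      rw [if_neg (show ¬((⟨n-1-t, by omega⟩ : Fin n).val = 0) by simp; omega)]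
      have e : (⟨n-1-t, by omega⟩ : Fin n).val - 1 = n-1-(t+1) := by simp; omega
      rw [e]
    have hz : lam n (.rgt x ⟨n-1-t, by omega⟩) (.inl y) (rgtSt n x (n-1-(t+1)))
        = fun _ => 0 := lam_rgt_ne (by simp; omega) _
    have hstep : Reach n (W k u) (rgtSt n x (n-1-t), k+3+i+t) 0
        (rgtSt n x (n-1-(t+1)), k+3+i+t+1) := by
      rw [rgtSt_lt (show n-1-t < n by omega)]
      exact reach_right rfl hr hd hz
    exact (h1.trans hstep).cast (by ring) (by rw [show k+3+i+(t+1) = k+3+i+t+1 by omega])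

/-- the leftward walk inside a block -/
lemma reach_lft (hn : n ≠ 0) (i : ℕ)
    (hin : ∀ s, s ≤ n → ∃ y, u[i + s]? = some y) :
    ∀ t, t ≤ n - 1 →
    Reach n (W k u) (lftSt n (n-1), k+2+i+n+1) 0 (lftSt n (n-1-t), k+2+i+n+1-t) := by
  intro t
  induction t with
  | zero => intro _; exact (Reach.refl _).cast rfl rfl
  | succ t ih =>
    intro ht
    have h1 := ih (by omega)
    obtain ⟨y, hy⟩ := hin (n - t) (by omega)
    have hr : readAt (W k u) (k+2+i+n+1-t-1) = some (.inl y) := by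
      rw [show k+2+i+n+1-t-1 = k+2+(i+(n-t)) by omega]
      exact raU k u hy
    have hd : δ n (.lft ⟨n-1-t, by omega⟩) (.inl y) = some (lftSt n (n-1-(t+1))) := by
      show some (lftNext n _) = _
      simp only [lftNext]
      rw [if_neg (show ¬((⟨n-1-t, by omega⟩ : Fin n).val = 0) by simp; omega)]
      have e : (⟨n-1-t, by omega⟩ : Fin n).val - 1 = n-1-(t+1) := by simp; omega
      rw [e]
    have hz : lam n (.lft ⟨n-1-t, by omega⟩) (.inl y) (lftSt n (n-1-(t+1)))
        = fun _ => 0 := rfl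
    have hstep : Reach n (W k u) (lftSt n (n-1-t), k+2+i+n+1-t) 0
        (lftSt n (n-1-(t+1)), k+2+i+n+1-(t+1)) := by
      rw [lftSt_lt (show n-1-t < n by omega)]
      have hstep' := reach_left (n := n) (k := k) (u := u) (q := .lft ⟨n-1-t, by omega⟩) rfl
        (show k+2+i+n+1-t ≠ 0 by omega) hr hd hz
      exact hstep'.cast rfl (by rw [show k+2+i+n+1-t-1 = k+2+i+n+1-(t+1) by omega])
    exact (h1.trans hstep).cast (by ring) rfl

end Blocks

end Ln2DPA

namespace Ln2DPA

open TwoWayFA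

section Forward

variable {n k : ℕ} {u : List ABCH}

lemma get?_exists {i : ℕ} (h : i < u.length) : ∃ y, u[i]? = some y :=
  ⟨u[i], List.getElem?_eq_getElem h⟩

lemma bc_of_get? (hu : ∀ y ∈ u, IsBC y) {i : ℕ} {y : ABCH} (h : u[i]? = some y) :
    IsBC y := hu y (List.mem_of_getElem? h)

lemma reach_block_full (hu : ∀ y ∈ u, IsBC y) (i : ℕ) {x : ABCH}
    (hx : u[i]? = some x) (hin : i + n < u.length) :
    Reach n (W k u) (.scan, k+2+i)
      (if u[i+n]? ≠ some x then -1 else 0) (.scan, k+2+(i+1)) := by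
  have hbcx : IsBC x := bc_of_get? hu hx
  by_cases hn : n = 0
  · subst hn
    have hz : (if u[i+0]? ≠ some x then (-1 : ℤ) else 0) = 0 := by
      rw [show i + 0 = i by omega, hx, if_neg (by simp)]
    have hstep := reach_right (n := 0) (k := k) (u := u) (q := .scan)
      (q' := .scan) (m := k+2+i) (z := 0) rfl (raU k u hx)
      (by rw [δ_scan_bc hbcx]; rfl) rfl
    exact hstep.cast (by rw [hz]) (by rw [show k+2+i+1 = k+2+(i+1) by omega])
  · obtain ⟨y, hy⟩ := get?_exists (show i + n < u.length from hin)
    have hbcy : IsBC y := bc_of_get? hu hy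
    have s1 : Reach n (W k u) (.scan, k+2+i) 0 (rgtSt n x (n-1), k+3+i) := by
      have := reach_right (n := n) (k := k) (u := u) (q := .scan)
        (q' := scanNext n x) (m := k+2+i) (z := 0) rfl (raU k u hx) (δ_scan_bc hbcx) rfl
      refine this.cast rfl ?_
      rw [scanNext, if_neg hn, show k+2+i+1 = k+3+i by omega]
    have s2 : Reach n (W k u) (rgtSt n x (n-1), k+3+i) 0 (rgtSt n x 0, k+2+i+n) := by
      have := reach_rgt (k := k) hn x i (n-1) le_rfl (fun s hs => by
        obtain ⟨y', hy'⟩ := get?_exists (show i+1+s < u.length by omega)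
        exact ⟨y', hy', bc_of_get? hu hy'⟩)
      refine this.cast rfl ?_
      rw [show n-1-(n-1) = 0 by omega, show k+3+i+(n-1) = k+2+i+n by omega]
    have s3 : Reach n (W k u) (rgtSt n x 0, k+2+i+n)
        (if u[i+n]? ≠ some x then -1 else 0) (lftSt n (n-1), k+2+i+n+1) := by
      rw [rgtSt_lt (show 0 < n by omega)]
      have hd : δ n (.rgt x ⟨0, by omega⟩) (.inl y) = some (lftSt n (n-1)) := by
        rw [δ_rgt_bc hbcy]
        simp [rgtNext]
      have := reach_right (n := n) (k := k) (u := u) (q := .rgt x ⟨0, by omega⟩)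
        (q' := lftSt n (n-1)) (m := k+2+i+n) (z := if y ≠ x then -1 else 0) rfl
        (by rw [show k+2+i+n = k+2+(i+n) by omega]; exact raU k u hy) hd
        (lam_rgt_zero rfl _)
      refine this.cast ?_ rfl
      rw [hy]
      congr 1
      simp
    have s4 : Reach n (W k u) (lftSt n (n-1), k+2+i+n+1) 0 (lftSt n 0, k+4+i) := by
      have := reach_lft (k := k) hn i
        (fun s hs => get?_exists (show i+s < u.length by omega)) (n-1) le_rfl
      refine this.cast rfl ?_
      rw [show n-1-(n-1) = 0 by omega, show k+2+i+n+1-(n-1) = k+4+i by omega]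
    have s5 : Reach n (W k u) (lftSt n 0, k+4+i) 0 (.scan, k+2+(i+1)) := by
      rw [lftSt_lt (show 0 < n by omega)]
      obtain ⟨y', hy'⟩ := get?_exists (show i+1 < u.length by omega)
      have hd : δ n (.lft ⟨0, by omega⟩) (.inl y') = some .scan := by
        show some (lftNext n _) = _
        simp [lftNext]
      have := reach_left (n := n) (k := k) (u := u) (q := .lft ⟨0, by omega⟩)
        (q' := .scan) (m := k+4+i) (z := 0) rfl (by omega)
        (by rw [show k+4+i-1 = k+2+(i+1) by omega]; exact raU k u hy') hd rfl
      exact this.cast rfl (by rw [show k+4+i-1 = k+2+(i+1) by omega])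
    exact ((((s1.trans s2).trans s3).trans s4).trans s5).cast (by ring) rfl

lemma reach_block_trunc (hu : ∀ y ∈ u, IsBC y) (i : ℕ) {x : ABCH}
    (hx : u[i]? = some x) (hin : u.length ≤ i + n) :
    Reach n (W k u) (.scan, k+2+i) 0 (.fin, k+3+u.length) := by
  have hbcx : IsBC x := bc_of_get? hu hx
  have hiL : i < u.length := by
    rw [List.getElem?_eq_some_iff] at hx; exact hx.1
  have hn : n ≠ 0 := by omega
  have s1 : Reach n (W k u) (.scan, k+2+i) 0 (rgtSt n x (n-1), k+3+i) := by
    have := reach_right (n := n) (k := k) (u := u) (q := .scan)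
      (q' := scanNext n x) (m := k+2+i) (z := 0) rfl (raU k u hx) (δ_scan_bc hbcx) rfl
    refine this.cast rfl ?_
    rw [scanNext, if_neg hn, show k+2+i+1 = k+3+i by omega]
  have s2 : Reach n (W k u) (rgtSt n x (n-1), k+3+i) 0
      (rgtSt n x (n-1-(u.length-i-1)), k+2+u.length) := by
    have := reach_rgt (k := k) hn x i (u.length-i-1) (by omega) (fun s hs => by
      obtain ⟨y', hy'⟩ := get?_exists (show i+1+s < u.length by omega)
      exact ⟨y', hy', bc_of_get? hu hy'⟩)
    exact this.cast rfl (by rw [show k+3+i+(u.length-i-1) = k+2+u.length by omega])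
  have s3 : Reach n (W k u) (rgtSt n x (n-1-(u.length-i-1)), k+2+u.length) 0
      (.fin, k+3+u.length) := by
    rw [rgtSt_lt (show n-1-(u.length-i-1) < n by omega)]
    have := reach_right (n := n) (k := k) (u := u)
      (q := .rgt x ⟨n-1-(u.length-i-1), by omega⟩) (q' := .fin)
      (m := k+2+u.length) (z := 0) rfl (raEnd k u) rfl rfl
    exact this.cast rfl (by rw [show k+2+u.length+1 = k+3+u.length by omega])
  exact ((s1.trans s2).trans s3).cast (by ring) rfl

lemma reach_scan_end : Reach n (W k u) (.scan, k+2+u.length) 0 (.fin, k+3+u.length) := by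
  have := reach_right (n := n) (k := k) (u := u) (q := .scan) (q' := .fin)
    (m := k+2+u.length) (z := 0) rfl (raEnd k u) rfl rfl
  exact this.cast rfl (by rw [show k+2+u.length+1 = k+3+u.length by omega])

lemma reach_countA : ∀ j, j ≤ k → Reach n (W k u) (.countA, 1) j (.countA, j+1) := by
  intro j
  induction j with
  | zero => intro _; exact (Reach.refl _).cast rfl rfl
  | succ j ih =>
    intro hj
    have h1 := ih (by omega)
    have hstep := reach_right (n := n) (k := k) (u := u) (q := .countA)
      (q' := .countA) (m := j+1) (z := 1) rfl (raA k u (show j < k by omega)) rfl rfl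
    exact (h1.trans hstep).cast (by push_cast; ring) rfl

lemma reach_init : Reach n (W k u) (.init, 0) k (.scan, k+2) := by
  have s0 : Reach n (W k u) (.init, 0) 0 (.countA, 1) :=
    reach_right (n := n) (k := k) (u := u) (q := .init) (q' := .countA)
      (m := 0) (z := 0) rfl (ra0 k u) rfl rfl
  have s1 := reach_countA (n := n) (u := u) k le_rfl
  have s2 : Reach n (W k u) (.countA, k+1) 0 (.scan, k+2) := by
    have := reach_right (n := n) (k := k) (u := u) (q := .countA)
      (q' := .scan) (m := k+1) (z := 0) rfl (raH k u) rfl rfl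
    exact this.cast rfl (by rw [show k+1+1 = k+2 by omega])
  exact ((s0.trans s1).trans s2).cast (by ring) rfl

lemma reach_main (hu : ∀ y ∈ u, IsBC y) :
    ∀ (v : List ABCH) (i : ℕ), u.drop i = v → i + v.length = u.length →
    Reach n (W k u) (.scan, k+2+i) (-(mismatches n v : ℤ)) (.fin, k+3+u.length) := by
  intro v
  induction v with
  | nil =>
    intro i _ hlen
    simp only [List.length_nil, add_zero] at hlen
    subst hlen
    exact reach_scan_end.cast (by rw [mismatches_nil]; ring) rfl
  | cons x v ih =>
    intro i hdrop hlen
    have hx : u[i]? = some x := by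
      have := List.getElem?_drop (xs := u) (i := i) (j := 0)
      rw [hdrop] at this
      simpa using this.symm
    have hdrop1 : u.drop (i+1) = v := by
      rw [← List.tail_drop, hdrop]
      rfl
    simp only [List.length_cons] at hlen
    by_cases hcase : i + n < u.length
    · have hfull := reach_block_full (k := k) hu i hx hcase
      have hih := ih (i+1) hdrop1 (by omega)
      refine (hfull.trans hih).cast ?_ rfl
      have hcond : (x :: v)[n]? = u[i+n]? := by
        rw [← hdrop, List.getElem?_drop]
      rw [mismatches_cons (show n ≤ v.length by omega), hcond]
      by_cases hc : u[i+n]? ≠ some x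
      · rw [if_pos hc, if_pos hc]; push_cast; ring
      · rw [if_neg hc, if_neg hc]; push_cast; ring
    · have htrunc := reach_block_trunc (n := n) (k := k) hu i hx (by omega)
      refine htrunc.cast ?_ rfl
      rw [mismatches_short (show v.length + 1 ≤ n by omega)]
      ring

lemma reach_total (hu : ∀ y ∈ u, IsBC y) :
    Reach n (W k u) (.init, 0) ((k : ℤ) - (mismatches n u : ℤ)) (.fin, k+3+u.length) := by
  have h1 := reach_init (n := n) (k := k) (u := u)
  have h2 := reach_main (n := n) (k := k) hu u 0 (by simp) (by omega)
  have h2' : Reach n (W k u) (.scan, k+2) (-(mismatches n u : ℤ)) (.fin, k+3+u.length) := by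
    have e : (St.scan (n := n), k+2+0) = (St.scan (n := n), k+2) := by norm_num
    rw [← e]
    exact h2
  exact (h1.trans h2').cast (by ring) rfl

end Forward

end Ln2DPA

namespace Ln2DPA

open TwoWayFA

section Backward

variable {n : ℕ}

def Inv (w0 : List ABCH) : St n × ℕ → Prop
  | (.init, _) => ∃ k u, (∀ x ∈ u, IsBC x) ∧ w0 = List.replicate k ABCH.a ++ ABCH.hash :: u
  | (.countA, m) => ∃ k u, (∀ x ∈ u, IsBC x) ∧
      w0.drop (m - 1) = List.replicate k ABCH.a ++ ABCH.hash :: u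
  | (.scan, m) => ∀ x ∈ w0.drop (m - 1), IsBC x
  | (.rgt _ _, m) => ∀ x ∈ w0.drop (m - 1), IsBC x
  | (.lft j, m) => ∀ x ∈ w0.drop (m - j.val - 2), IsBC x
  | (.fin, _) => True

lemma readAt_inl {w0 : List ABCH} {m : ℕ} {x : ABCH}
    (h : readAt w0 m = some (.inl x)) :
    1 ≤ m ∧ m ≤ w0.length ∧ w0[m - 1]? = some x := by
  rw [readAt] at h
  by_cases h0 : m = 0
  · rw [if_pos h0] at h; exact absurd (Option.some.inj h) (by simp)
  rw [if_neg h0] at h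
  by_cases h1 : m = w0.length + 1
  · rw [if_pos h1] at h; exact absurd (Option.some.inj h) (by simp)
  rw [if_neg h1] at h
  rcases hg : w0[m - 1]? with _ | y
  · rw [hg] at h; exact absurd h (by simp)
  · rw [hg] at h
    simp only [Option.map_some] at h
    obtain h2 := Option.some.inj h
    have : y = x := by
      have := congrArg (fun s => match s with | Sum.inl z => z | _ => y) h2
      simpa using this
    subst this
    have hlt : m - 1 < w0.length := by
      rw [List.getElem?_eq_some_iff] at hg; exact hg.1
    exact ⟨by omega, by omega, by simp [hg]⟩

lemma readAt_endd {w0 : List ABCH} {m : ℕ}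
    (h : readAt w0 m = some (.inr true)) : m = w0.length + 1 := by
  rw [readAt] at h
  by_cases h0 : m = 0
  · rw [if_pos h0] at h
    exact absurd (Option.some.inj h) (by simp)
  rw [if_neg h0] at h
  by_cases h1 : m = w0.length + 1
  · exact h1
  rw [if_neg h1] at h
  rcases hg : w0[m - 1]? with _ | y <;> rw [hg] at h
  · exact absurd h (by simp)
  · simp only [Option.map_some] at h
    exact absurd (Option.some.inj h) (by simp)

lemma readAt_startt {w0 : List ABCH} {m : ℕ}
    (h : readAt w0 m = some (.inr false)) : m = 0 := by
  rw [readAt] at h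
  by_cases h0 : m = 0
  · exact h0
  rw [if_neg h0] at h
  by_cases h1 : m = w0.length + 1
  · rw [if_pos h1] at h
    exact absurd (Option.some.inj h) (by simp)
  rw [if_neg h1] at h
  rcases hg : w0[m - 1]? with _ | y <;> rw [hg] at h
  · exact absurd h (by simp)
  · simp only [Option.map_some] at h
    exact absurd (Option.some.inj h) (by simp)

lemma drop_cons_of_get? {w0 : List ABCH} {t : ℕ} {x : ABCH} (h : w0[t]? = some x) :
    w0.drop t = x :: w0.drop (t + 1) := by
  rw [List.getElem?_eq_some_iff] at h
  obtain ⟨hl, hget⟩ := h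
  rw [List.drop_eq_getElem_cons hl, hget]

lemma bc_drop_mono {w0 : List ABCH} {s t : ℕ} (hst : s ≤ t)
    (h : ∀ x ∈ w0.drop s, IsBC x) : ∀ x ∈ w0.drop t, IsBC x := by
  intro x hx
  refine h x ?_
  have : w0.drop t = (w0.drop s).drop (t - s) := by
    rw [List.drop_drop, show s + (t - s) = t by omega]
  rw [this] at hx
  exact List.drop_subset _ _ hx

lemma inv_scanNext {w0 : List ABCH} {x : ABCH} {m : ℕ}
    (h : Inv w0 (scanNext n x, m)) : ∀ y ∈ w0.drop (m - 1), IsBC y := by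
  rw [scanNext] at h
  split_ifs at h with hn
  · exact h
  · rw [rgtSt_lt (show n - 1 < n by omega)] at h
    exact h

lemma inv_back (w0 : List ABCH) :
    ∀ ρ : List (St n × ℕ), ρ.Chain' ((A n).step w0) →
    ρ.getLast? = some (.fin, w0.length + 2) →
    ∀ c, ρ.head? = some c → Inv w0 c := by
  intro ρ
  induction ρ with
  | nil => intro _ h; simp at h
  | cons c₀ t ih =>
    intro hchain hlast c hc
    obtain rfl : c₀ = c := by simpa using hc
    rcases t with _ | ⟨c₁, t⟩
    · obtain rfl : c₀ = (.fin, w0.length + 2) := by simpa using hlast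
      trivial
    have hstep : (A n).step w0 c₀ c₁ := (List.isChain_cons_cons.mp hchain).1
    have hinv₁ : Inv w0 c₁ := by
      refine ih (List.isChain_cons_cons.mp hchain).2 ?_ c₁ rfl
      rwa [List.getLast?_cons_cons] at hlast
    clear ih hchain hlast hc
    obtain ⟨a, hread, htrans, hmov⟩ := hstep
    obtain ⟨q, m⟩ := c₀
    obtain ⟨q₁, m₁⟩ := c₁
    have htrans' : δ n q a = some q₁ := htrans
    cases q with
    | init =>
      -- only transition: reading ⊢, going to countA
      rcases a with x | b
      · cases x <;> exact absurd htrans' (by simp [δ])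
      cases b
      · -- ⊢
        obtain rfl : St.countA = q₁ := Option.some.inj htrans'
        have hm1 : m₁ = m + 1 := by simpa [A] using hmov
        subst hm1
        obtain ⟨k, u, hu, hshape⟩ := hinv₁
        rw [show m + 1 - 1 = m by omega] at hshape
        have hm0 : m = 0 := readAt_startt (by simpa [readIdx, A] using hread)
        subst hm0
        rw [List.drop_zero] at hshape
        exact ⟨k, u, hu, hshape⟩
      · exact absurd htrans' (by simp [δ])
    | countA =>
      have hri : (A n).readIdx (.countA, m) = m := rfl
      rcases a with x | b
      · cases x with
        | a =>
          obtain rfl : St.countA = q₁ := Option.some.inj htrans'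
          have hm1 : m₁ = m + 1 := by simpa [A] using hmov
          subst hm1
          obtain ⟨k, u, hu, hshape⟩ := hinv₁
          rw [show m + 1 - 1 = m by omega] at hshape
          obtain ⟨hm1', hm2', hget⟩ := readAt_inl (by rwa [hri] at hread)
          refine ⟨k + 1, u, hu, ?_⟩
          rw [drop_cons_of_get? hget, show m - 1 + 1 = m by omega, hshape,
            List.replicate_succ]
          rfl
        | hash =>
          obtain rfl : St.scan = q₁ := Option.some.inj htrans'
          have hm1 : m₁ = m + 1 := by simpa [A] using hmov
          subst hm1
          have hinv' : ∀ x ∈ w0.drop (m + 1 - 1), IsBC x := hinv₁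
          rw [show m + 1 - 1 = m by omega] at hinv'
          obtain ⟨hm1', hm2', hget⟩ := readAt_inl (by rwa [hri] at hread)
          refine ⟨0, w0.drop m, hinv', ?_⟩
          rw [drop_cons_of_get? hget, show m - 1 + 1 = m by omega]
          rfl
        | b => exact absurd htrans' (by simp [δ])
        | c => exact absurd htrans' (by simp [δ])
      · cases b <;> exact absurd htrans' (by simp [δ])
    | scan =>
      have hri : (A n).readIdx (.scan, m) = m := rfl
      rcases a with x | b
      · have hbc : IsBC x ∨ (δ n .scan (.inl x) = none) := by
          cases x
          · exact Or.inr rfl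
          · exact Or.inl (Or.inl rfl)
          · exact Or.inl (Or.inr rfl)
          · exact Or.inr rfl
        rcases hbc with hbc | hno
        · have hq₁ : q₁ = scanNext n x := by
            rw [δ_scan_bc hbc] at htrans'
            exact (Option.some.inj htrans').symm
          subst hq₁
          have hm1 : m₁ = m + 1 := by simpa [A] using hmov
          subst hm1
          have hdm : ∀ y ∈ w0.drop m, IsBC y := by
            have := inv_scanNext (n := n) hinv₁
            rwa [show m + 1 - 1 = m by omega] at this
          obtain ⟨hm1', hm2', hget⟩ := readAt_inl (by rwa [hri] at hread)
          intro y hy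
          rw [drop_cons_of_get? hget, show m - 1 + 1 = m by omega] at hy
          rcases List.mem_cons.mp hy with rfl | hy
          · exact hbc
          · exact hdm y hy
        · rw [hno] at htrans'; exact absurd htrans' (by simp)
      · cases b
        · exact absurd htrans' (by simp [δ])
        · have hm : m = w0.length + 1 := readAt_endd (by rwa [hri] at hread)
          subst hm
          intro y hy
          rw [show w0.length + 1 - 1 = w0.length by omega, List.drop_length] at hy
          simp at hy
    | rgt z j =>
      have hri : (A n).readIdx (.rgt z j, m) = m := rfl
      rcases a with x | b
      · have hbc : IsBC x ∨ (δ n (.rgt z j) (.inl x) = none) := by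
          cases x
          · exact Or.inr rfl
          · exact Or.inl (Or.inl rfl)
          · exact Or.inl (Or.inr rfl)
          · exact Or.inr rfl
        rcases hbc with hbc | hno
        · have hq₁ : q₁ = rgtNext n z j := by
            rw [δ_rgt_bc hbc] at htrans'
            exact (Option.some.inj htrans').symm
          subst hq₁
          have hm1 : m₁ = m + 1 := by simpa [A] using hmov
          subst hm1
          obtain ⟨hm1', hm2', hget⟩ := readAt_inl (by rwa [hri] at hread)
          have hdm : ∀ y ∈ w0.drop m, IsBC y := by
            rw [rgtNext] at hinv₁
            split_ifs at hinv₁ with hj0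
            · rw [lftSt_lt (show n - 1 < n by have := j.isLt; omega)] at hinv₁
              have : ∀ y ∈ w0.drop (m + 1 - (n-1) - 2), IsBC y := hinv₁
              exact bc_drop_mono (by have := j.isLt; omega) this
            · rw [rgtSt_lt (show j.val - 1 < n by have := j.isLt; omega)] at hinv₁
              have : ∀ y ∈ w0.drop (m + 1 - 1), IsBC y := hinv₁
              rwa [show m + 1 - 1 = m by omega] at this
          intro y hy
          rw [drop_cons_of_get? hget, show m - 1 + 1 = m by omega] at hy
          rcases List.mem_cons.mp hy with rfl | hy
          · exact hbc
          · exact hdm y hy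
        · rw [hno] at htrans'; exact absurd htrans' (by simp)
      · cases b
        · exact absurd htrans' (by simp [δ])
        · have hm : m = w0.length + 1 := readAt_endd (by rwa [hri] at hread)
          subst hm
          intro y hy
          rw [show w0.length + 1 - 1 = w0.length by omega, List.drop_length] at hy
          simp at hy
    | lft j =>
      have hq₁ : q₁ = lftNext n j := by
        have : δ n (.lft j) a = some (lftNext n j) := rfl
        rw [this] at htrans'
        exact (Option.some.inj htrans').symm
      subst hq₁
      have hmov' : m ≠ 0 ∧ m₁ = m - 1 := by simpa [A] using hmov
      obtain ⟨hm0, hm1⟩ := hmov'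
      subst hm1
      rw [lftNext] at hinv₁
      split_ifs at hinv₁ with hj0
      · have : ∀ y ∈ w0.drop (m - 1 - 1), IsBC y := hinv₁
        intro y hy
        refine this y ?_
        rwa [show m - 1 - 1 = m - j.val - 2 by omega]
      · rw [lftSt_lt (show j.val - 1 < n by have := j.isLt; omega)] at hinv₁
        have : ∀ y ∈ w0.drop (m - 1 - (j.val - 1) - 2), IsBC y := hinv₁
        intro y hy
        refine this y ?_
        rwa [show m - 1 - (j.val - 1) - 2 = m - j.val - 2 by omega]
    | fin =>
      rcases a with x | b
      · cases x <;> exact absurd htrans' (by simp [δ])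
      · cases b <;> exact absurd htrans' (by simp [δ])

lemma δ_fin (a : ABCH ⊕ Bool) : δ n .fin a = none := by
  rcases a with x | b
  · cases x <;> rfl
  · cases b <;> rfl

lemma F_fin (w0 : List ABCH) (m : ℕ) : F n w0 (.fin, m) = none := by
  rw [F]
  rcases h : readAt w0 ((A n).readIdx (.fin, m)) with _ | a
  · rfl
  · rw [Option.bind_some, δ_fin]
    rfl

end Backward

end Ln2DPA


/-- For every `n`, `L_n` is accepted by a deterministic two-way
Parikh automaton with `O(n)` states, dimension 1 and acceptance constraint `{0}`. -/
theorem Ln_accepted_by_2DPA :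
    ∃ C : ℕ, ∀ n : ℕ, ∃ (Q : Type) (_ : Fintype Q) (A : TwoWayFA ABCH Q)
      (lam : Q → (ABCH ⊕ Bool) → Q → (Fin 1 → ℤ)),
        A.Deterministic ∧ Fintype.card Q ≤ C * (n + 1) ∧
          paLang A lam {v | v = 0} = Ln n := by
  refine ⟨5, fun n => ⟨Ln2DPA.St n, inferInstance, Ln2DPA.A n, Ln2DPA.lam n,
    Ln2DPA.A_det, Ln2DPA.St.card_le, ?_⟩⟩
  ext w
  simp only [paLang, Ln, Set.mem_setOf_eq]
  constructor
  · rintro ⟨ρ, ⟨⟨hne, hchain⟩, ⟨q0, hq0, hhead⟩, ⟨qf, hqf, hlast⟩⟩, hval⟩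
    obtain rfl : q0 = Ln2DPA.St.init := hq0
    obtain rfl : qf = Ln2DPA.St.fin := hqf
    obtain ⟨k, u, hu, hshape⟩ :=
      Ln2DPA.inv_back w ρ hchain hlast (Ln2DPA.St.init, 0) hhead
    subst hshape
    refine ⟨k, u, hu, rfl, ?_⟩
    obtain ⟨l, hh, hl, hc, hv⟩ := Ln2DPA.reach_total (n := n) (k := k) (u := u) hu
    have hWeq : Ln2DPA.W k u = List.replicate k ABCH.a ++ ABCH.hash :: u := rfl
    rw [hWeq] at hc hv
    have hlne : l ≠ [] := by
      intro h; rw [h] at hh; simp at hh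
    have hρl : ρ = l := by
      refine forced_unique (Ln2DPA.F n (List.replicate k ABCH.a ++ ABCH.hash :: u)) ρ l
        (hchain.imp fun a b h => Ln2DPA.step_iff.mp h)
        (hc.imp fun a b h => Ln2DPA.step_iff.mp h) hne hlne
        (hhead.trans hh.symm) ?_ ?_
      · intro x hx
        rw [hlast] at hx
        obtain rfl := Option.some.inj hx
        exact Ln2DPA.F_fin _ _
      · intro x hx
        rw [hl] at hx
        obtain rfl := Option.some.inj hx
        exact Ln2DPA.F_fin _ _
    have h0 : (fun _ : Fin 1 => (k : ℤ) - (mismatches n u : ℤ)) = 0 := by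
      rw [← hv, ← hρl]
      exact hval
    have h1 := congrFun h0 0
    simp only [Pi.zero_apply] at h1
    have : (k : ℤ) = (mismatches n u : ℤ) := by linarith
    exact_mod_cast this
  · rintro ⟨k, u, hu, rfl, hk⟩
    obtain ⟨l, hh, hl, hc, hv⟩ := Ln2DPA.reach_total (n := n) (k := k) (u := u) hu
    have hWeq : Ln2DPA.W k u = List.replicate k ABCH.a ++ ABCH.hash :: u := rfl
    rw [hWeq] at hc hv
    have hlne : l ≠ [] := by
      intro h; rw [h] at hh; simp at hh
    refine ⟨l, ⟨⟨hlne, hc⟩, ⟨Ln2DPA.St.init, rfl, hh⟩, ⟨Ln2DPA.St.fin, rfl, ?_⟩⟩, ?_⟩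
    · rw [show (List.replicate k ABCH.a ++ ABCH.hash :: u).length + 2 = k + 3 + u.length
        by simp; omega]
      exact hl
    · show runVal _ _ _ _ = 0
      rw [hv]
      funext i
      simp [hk]
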